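/- Let m ≥ 1 and let f : [0,1]^m → ℝ be Lebesgue integrable. Suppose that ∫_{A₁×⋯×A_m} f dλ^m = 0 for all m-tuples A₁,…,A_m of pairwise disjoint Lebesgue-measurable subsets of [0,1] with λ(A₁) = ⋯ = λ(A_m). Then f = 0 almost everywhere on [0,1]^m. -/

import Mathlib

open MeasureTheory

section Aux
open Set
open scoped ENNReal

lemma aux_exists_subset (S : Set ℝ) (hS : MeasurableSet S) (hsub : S ⊆ Icc (0:ℝ) 1)
    {r : ℝ≥0∞} (hr : r ≤ volume S) :
    ∃ T, T ⊆ S ∧ MeasurableSet T ∧ volume T = r := by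
  have hfin : volume S ≠ ∞ := by
    refine ne_of_lt (lt_of_le_of_lt (measure_mono hsub) ?_)
    simp [Real.volume_Icc]
  set g : ℝ → ℝ := fun u => (volume (S ∩ Iic u)).toReal with hg
  have hfin' : ∀ u, volume (S ∩ Iic u) ≠ ∞ := fun u =>
    ne_of_lt (lt_of_le_of_lt (measure_mono (inter_subset_left)) hfin.lt_top)
  have hmono : Monotone g := by
    intro u v huv
    exact ENNReal.toReal_mono (hfin' v)
      (measure_mono (inter_subset_inter_right _ (Iic_subset_Iic.mpr huv)))
  have hbd : ∀ u v, u ≤ v → g v ≤ g u + (v - u) := by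
    intro u v huv
    have key : volume (S ∩ Iic v) ≤ volume (S ∩ Iic u) + ENNReal.ofReal (v - u) := by
      calc volume (S ∩ Iic v) ≤ volume ((S ∩ Iic u) ∪ Ioc u v) := by
            refine measure_mono fun x hx => ?_
            rcases le_or_gt x u with h' | h'
            · exact Or.inl ⟨hx.1, h'⟩
            · exact Or.inr ⟨h', hx.2⟩
        _ ≤ volume (S ∩ Iic u) + volume (Ioc u v) := measure_union_le _ _
        _ = volume (S ∩ Iic u) + ENNReal.ofReal (v - u) := by rw [Real.volume_Ioc]
    have h2 := ENNReal.toReal_mono (by simp [hfin' u]) key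
    rw [ENNReal.toReal_add (hfin' u) (by simp), ENNReal.toReal_ofReal (by linarith)] at h2
    exact h2
  have hlip : LipschitzWith 1 g := by
    refine LipschitzWith.of_dist_le_mul fun u v => ?_
    rw [Real.dist_eq, Real.dist_eq, NNReal.coe_one, one_mul]
    rcases le_total u v with h | h
    · rw [abs_sub_comm (g u), abs_of_nonneg (sub_nonneg.2 (hmono h)),
        abs_sub_comm u, abs_of_nonneg (sub_nonneg.2 h)]
      linarith [hbd u v h]
    · rw [abs_of_nonneg (sub_nonneg.2 (hmono h)), abs_of_nonneg (sub_nonneg.2 h)]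
      linarith [hbd v u h]
  have hg0 : g 0 = 0 := by
    have : S ∩ Iic 0 ⊆ {0} := fun x hx => le_antisymm hx.2 (hsub hx.1).1
    have h0 : volume (S ∩ Iic 0) = 0 :=
      le_antisymm (le_trans (measure_mono this) (by simp)) (by simp)
    simp [hg, h0]
  have hg1 : g 1 = (volume S).toReal := by
    have : S ∩ Iic 1 = S := inter_eq_left.mpr fun x hx => (hsub hx).2
    simp [hg, this]
  have hmem : r.toReal ∈ Icc (g 0) (g 1) := by
    constructor
    · rw [hg0]; exact ENNReal.toReal_nonneg
    · rw [hg1]; exact ENNReal.toReal_mono hfin hr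
  obtain ⟨u, -, hu⟩ := intermediate_value_Icc (by norm_num : (0:ℝ) ≤ 1)
    (hlip.continuous.continuousOn) hmem
  refine ⟨S ∩ Iic u, inter_subset_left, hS.inter measurableSet_Iic, ?_⟩
  have := hu
  rw [hg] at this
  exact (ENNReal.toReal_eq_toReal_iff' (hfin' u) (ne_of_lt (lt_of_le_of_lt hr hfin.lt_top))).mp this

lemma aux_split (t : ℝ≥0∞) (ht : 0 < t) :
    ∀ (n : ℕ) (S : Set ℝ), MeasurableSet S → S ⊆ Icc (0:ℝ) 1 → volume S ≤ n * t →
    ∃ P : Fin n → Set ℝ, (∀ j, MeasurableSet (P j)) ∧ (∀ j, P j ⊆ S) ∧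
      Pairwise (Function.onFun Disjoint P) ∧ (∀ j, volume (P j) = t ∨ P j = ∅) ∧
      volume (S \ ⋃ j, P j) < t := by
  intro n
  induction n with
  | zero =>
    intro S hS hsub hle
    refine ⟨fun j => j.elim0, fun j => j.elim0, fun j => j.elim0,
      fun i j _ => i.elim0, fun j => j.elim0, ?_⟩
    have : volume S = 0 := le_antisymm (by simpa using hle) (by simp)
    calc volume (S \ ⋃ j : Fin 0, (fun j => j.elim0 (α := Set ℝ)) j) ≤ volume S :=
          measure_mono diff_subset
      _ = 0 := this
      _ < t := ht
  | succ n ih =>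
    intro S hS hsub hle
    rcases lt_or_ge (volume S) t with hlt | hge
    · refine ⟨fun _ => ∅, fun _ => MeasurableSet.empty, fun _ => empty_subset _,
        fun i j _ => by simp [Function.onFun], fun j => Or.inr rfl, ?_⟩
      calc volume (S \ ⋃ _ : Fin (n+1), (∅ : Set ℝ)) ≤ volume S := measure_mono diff_subset
        _ < t := hlt
    · obtain ⟨T, hTsub, hTmeas, hTvol⟩ := aux_exists_subset S hS hsub hge
      have hfin : volume S ≠ ∞ := by
        refine ne_of_lt (lt_of_le_of_lt (measure_mono hsub) ?_)
        simp [Real.volume_Icc]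
      have hrest : volume (S \ T) ≤ n * t := by
        have hd : volume (S \ T) = volume S - t := by
          rw [measure_diff hTsub hTmeas.nullMeasurableSet (by rw [hTvol]; exact ne_top_of_le_ne_top hfin hge), hTvol]
        rw [hd, tsub_le_iff_right]
        calc volume S ≤ (n+1 : ℕ) * t := hle
          _ = n * t + t := by push_cast; ring
      obtain ⟨P, hPm, hPs, hPd, hPv, hPr⟩ := ih (S \ T) (hS.diff hTmeas)
        (fun x hx => hsub hx.1) hrest
      refine ⟨Fin.cons T P, ?_, ?_, ?_, ?_, ?_⟩
      · intro j
        refine Fin.cases ?_ ?_ j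
        · exact hTmeas
        · exact hPm
      · intro j
        refine Fin.cases ?_ ?_ j
        · exact hTsub
        · exact fun i => (hPs i).trans diff_subset
      · intro i j hij
        rcases Fin.eq_zero_or_eq_succ i with rfl | ⟨i', rfl⟩ <;>
          rcases Fin.eq_zero_or_eq_succ j with rfl | ⟨j', rfl⟩
        · exact absurd rfl hij
        · simp only [Function.onFun, Fin.cons_zero, Fin.cons_succ]
          exact (disjoint_sdiff_left.mono_left (hPs j')).symm
        · simp only [Function.onFun, Fin.cons_zero, Fin.cons_succ]
          exact disjoint_sdiff_left.mono_left (hPs i')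
        · simp only [Function.onFun, Fin.cons_succ]
          exact hPd (fun h => hij (by rw [h]))
      · intro j
        rcases Fin.eq_zero_or_eq_succ j with rfl | ⟨j', rfl⟩
        · exact Or.inl (by simpa using hTvol)
        · simpa using hPv j'
      · have hU : (⋃ j, (Fin.cons T P : Fin (n+1) → Set ℝ) j) = T ∪ ⋃ j, P j := by
          ext x
          simp [Fin.exists_fin_succ]
        rw [hU, ← diff_diff]
        exact hPr

lemma aux_pi_iUnion {m : ℕ} {κ : Type*} (s : Fin m → κ → Set ℝ) :
    (Set.univ.pi fun i => ⋃ j, s i j) = ⋃ τ : Fin m → κ, Set.univ.pi fun i => s i (τ i) := by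
  ext x
  simp only [mem_pi, mem_univ, forall_true_left, mem_iUnion]
  exact Classical.skolem (p := fun i j => x i ∈ s i j)

lemma aux_disjoint_pi {m : ℕ} {u v : Fin m → Set ℝ} {i : Fin m} (h : Disjoint (u i) (v i)) :
    Disjoint (Set.univ.pi u) (Set.univ.pi v) := by
  rw [Set.disjoint_left]
  intro x hx hx'
  exact Set.disjoint_left.mp h (hx i trivial) (hx' i trivial)

lemma aux_key (m : ℕ) (hm : 1 ≤ m) (f : (Fin m → ℝ) → ℝ)
    (hf : IntegrableOn f (Set.univ.pi fun _ : Fin m => Set.Icc (0 : ℝ) 1) volume)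
    (H : ∀ A : Fin m → Set ℝ, (∀ i, MeasurableSet (A i)) →
      (∀ i, A i ⊆ Set.Icc (0 : ℝ) 1) →
      (∀ i j, i ≠ j → Disjoint (A i) (A j)) →
      (∀ i j, volume (A i) = volume (A j)) →
      ∫ x in Set.univ.pi A, f x = 0)
    (C : Fin m → Set ℝ) (hCm : ∀ i, MeasurableSet (C i)) (hCs : ∀ i, C i ⊆ Icc (0:ℝ) 1)
    (hed : ∀ i j, C i = C j ∨ Disjoint (C i) (C j)) :
    ∫ x in Set.univ.pi C, f x = 0 := by
  classical
  set cube : Set (Fin m → ℝ) := Set.univ.pi fun _ : Fin m => Icc (0:ℝ) 1 with hcube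
  have hcube_meas : MeasurableSet cube := MeasurableSet.univ_pi fun _ => measurableSet_Icc
  have hfin : ∫⁻ x, ‖f x‖₊ ∂(volume.restrict cube) ≠ ∞ := hf.2.ne
  refine norm_le_zero_iff.mp (le_of_forall_pos_le_add fun ε hε => ?_)
  rw [zero_add]
  -- absolute continuity
  obtain ⟨δ, hδpos, hδ⟩ := exists_pos_setLIntegral_lt_of_measure_lt (μ := volume.restrict cube)
    hfin (ε := ENNReal.ofReal (ε/2)) (by simp [ENNReal.ofReal_eq_zero]; linarith)
  -- choose n, t
  set M : ℝ≥0∞ := ((m + m*m : ℕ) : ℝ≥0∞) with hM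
  have hM0 : M ≠ 0 := by
    simp only [hM, Ne, Nat.cast_eq_zero]
    omega
  have hMtop : M ≠ ∞ := ENNReal.natCast_ne_top _
  obtain ⟨n, hn⟩ := ENNReal.exists_inv_nat_lt (a := δ / M)
    (by simp only [Ne, ENNReal.div_eq_zero_iff, not_or]; exact ⟨hδpos.ne', hMtop⟩)
  have hn0 : n ≠ 0 := by
    rintro rfl
    simp only [Nat.cast_zero, ENNReal.inv_zero] at hn
    exact (lt_irrefl _ (lt_of_le_of_lt le_top hn)).elim
  set t : ℝ≥0∞ := ((n : ℝ≥0∞))⁻¹ with htdef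
  have ht : 0 < t := ENNReal.inv_pos.mpr (by simp)
  have htn : (n : ℝ≥0∞) * t = 1 := ENNReal.mul_inv_cancel (Nat.cast_ne_zero.mpr hn0) (by simp)
  have hMt : M * t < δ := by
    have := (ENNReal.lt_div_iff_mul_lt (Or.inl hM0) (Or.inl hMtop)).mp hn
    rw [mul_comm] at this
    exact this
  -- choose partitions depending only on the set
  have hex : ∀ S : Set ℝ, ∃ P : Fin n → Set ℝ,
      MeasurableSet S → S ⊆ Icc (0:ℝ) 1 →
      ((∀ j, MeasurableSet (P j)) ∧ (∀ j, P j ⊆ S) ∧ Pairwise (Function.onFun Disjoint P) ∧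
       (∀ j, volume (P j) = t ∨ P j = ∅) ∧ volume (S \ ⋃ j, P j) < t) := by
    intro S
    by_cases h1 : MeasurableSet S
    · by_cases h2 : S ⊆ Icc (0:ℝ) 1
      · obtain ⟨P, hP⟩ := aux_split t ht n S h1 h2
          (by
            calc volume S ≤ 1 := by
                  refine le_trans (measure_mono h2) ?_
                  simp [Real.volume_Icc]
              _ = (n : ℝ≥0∞) * t := htn.symm)
        exact ⟨P, fun _ _ => hP⟩
      · exact ⟨fun _ => ∅, fun _ h2' => absurd h2' h2⟩
    · exact ⟨fun _ => ∅, fun h1' _ => absurd h1' h1⟩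
  choose Pt hPt using hex
  set Q : Fin m → Fin n → Set ℝ := fun i => Pt (C i) with hQdef
  have hQ : ∀ i, (∀ j, MeasurableSet (Q i j)) ∧ (∀ j, Q i j ⊆ C i) ∧
      Pairwise (Function.onFun Disjoint (Q i)) ∧ (∀ j, volume (Q i j) = t ∨ Q i j = ∅) ∧
      volume (C i \ ⋃ j, Q i j) < t := fun i => hPt (C i) (hCm i) (hCs i)
  have hQeq : ∀ i j, C i = C j → Q i = Q j := by
    intro i j h
    simp only [hQdef, h]
  set D : Fin m → Set ℝ := fun i => ⋃ p, Q i p with hDdef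
  have hDm : ∀ i, MeasurableSet (D i) := fun i => MeasurableSet.iUnion (hQ i).1
  have hDsub : ∀ i, D i ⊆ C i := fun i => iUnion_subset (hQ i).2.1
  have hQvle : ∀ i p, volume (Q i p) ≤ t := by
    intro i p
    rcases (hQ i).2.2.2.1 p with h | h
    · exact h.le
    · simp [h]
  have hpiC_cube : Set.univ.pi C ⊆ cube := pi_mono fun i _ => hCs i
  have hpiD_C : Set.univ.pi D ⊆ Set.univ.pi C := pi_mono fun i _ => hDsub i
  have hint : ∀ s : Set (Fin m → ℝ), s ⊆ cube → IntegrableOn f s volume :=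
    fun s hs => hf.mono_set hs
  have hQm : ∀ (τ : Fin m → Fin n), MeasurableSet (Set.univ.pi fun i => Q i (τ i)) :=
    fun τ => MeasurableSet.univ_pi fun i => (hQ i).1 (τ i)
  have hQsubcube : ∀ (τ : Fin m → Fin n), (Set.univ.pi fun i => Q i (τ i)) ⊆ cube :=
    fun τ => pi_mono fun i _ => ((hQ i).2.1 (τ i)).trans (hCs i)
  have hτdisj : Pairwise (Function.onFun Disjoint fun τ : Fin m → Fin n =>
      Set.univ.pi fun i => Q i (τ i)) := by
    intro τ τ' hττ'
    obtain ⟨i, hi⟩ := Function.ne_iff.mp hττ'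
    exact aux_disjoint_pi (u := fun i => Q i (τ i)) (v := fun i => Q i (τ' i)) (i := i)
      ((hQ i).2.2.1 hi)
  have hgood : ∀ τ : Fin m → Fin n, (∀ i j, i ≠ j → Disjoint (Q i (τ i)) (Q j (τ j))) →
      ∫ x in Set.univ.pi (fun i => Q i (τ i)), f x = 0 := by
    intro τ hdisj
    by_cases hemp : ∃ i, Q i (τ i) = ∅
    · obtain ⟨i, hi⟩ := hemp
      rw [Set.univ_pi_eq_empty (t := fun i => Q i (τ i)) hi]
      simp
    · push_neg at hemp
      refine H _ (fun i => (hQ i).1 (τ i)) (fun i => ((hQ i).2.1 (τ i)).trans (hCs i)) hdisj ?_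
      intro i j
      rw [((hQ i).2.2.2.1 (τ i)).resolve_right (Set.nonempty_iff_ne_empty.mp (hemp i)),
        ((hQ j).2.2.2.1 (τ j)).resolve_right (Set.nonempty_iff_ne_empty.mp (hemp j))]
  set B : Finset (Fin m → Fin n) :=
    Finset.univ.filter (fun τ => ¬ ∀ i j, i ≠ j → Disjoint (Q i (τ i)) (Q j (τ j))) with hB
  have hbadstruct : ∀ τ ∈ B, ∃ i j, i ≠ j ∧ C i = C j ∧ τ i = τ j := by
    intro τ hτ
    rw [hB, Finset.mem_filter] at hτ
    have h := hτ.2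
    push_neg at h
    obtain ⟨i, j, hij, hnd⟩ := h
    have hCij : C i = C j := by
      rcases hed i j with h' | h'
      · exact h'
      · exact absurd (h'.mono ((hQ i).2.1 (τ i)) ((hQ j).2.1 (τ j))) hnd
    refine ⟨i, j, hij, hCij, ?_⟩
    by_contra hττ
    apply hnd
    have hQQ : Q j = Q i := (hQeq i j hCij).symm
    rw [hQQ]
    exact (hQ i).2.2.1 hττ
  have hsumD : ∫ x in Set.univ.pi D, f x
      = ∑ τ ∈ B, ∫ x in Set.univ.pi (fun i => Q i (τ i)), f x := by
    have h1 : Set.univ.pi D = ⋃ τ : Fin m → Fin n, Set.univ.pi fun i => Q i (τ i) :=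
      aux_pi_iUnion Q
    rw [h1, integral_iUnion hQm hτdisj (hint _ (by rw [← h1]; exact hpiD_C.trans hpiC_cube)),
      tsum_fintype]
    refine (Finset.sum_subset (Finset.subset_univ B) (fun τ _ hτ => hgood τ ?_)).symm
    simp only [hB, Finset.mem_filter, Finset.mem_univ, true_and, not_not] at hτ
    exact hτ
  set BadSet : Set (Fin m → ℝ) := ⋃ τ ∈ B, Set.univ.pi (fun i => Q i (τ i)) with hBS
  have hBSmeas : MeasurableSet BadSet :=
    MeasurableSet.biUnion (Finset.countable_toSet B) (fun τ _ => hQm τ)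
  have hBScube : BadSet ⊆ cube := iUnion₂_subset fun τ _ => hQsubcube τ
  have hsumBad : ∑ τ ∈ B, ∫ x in Set.univ.pi (fun i => Q i (τ i)), f x
      = ∫ x in BadSet, f x :=
    (integral_biUnion_finset B (fun τ _ => hQm τ) (fun τ _ τ' _ h => hτdisj h)
      (fun τ _ => hint _ (hQsubcube τ))).symm
  -- measure bound for BadSet
  have hBadvol : volume BadSet < δ := by
    set E : Fin m × Fin m × Fin n → Set (Fin m → ℝ) := fun z =>
      if z.1 = z.2.1 then ∅ else
        Set.univ.pi (fun l => if l = z.1 ∨ l = z.2.1 then Q z.1 z.2.2 else Icc (0:ℝ) 1) with hE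
    have hsub : BadSet ⊆ ⋃ z, E z := by
      refine iUnion₂_subset fun τ hτ => ?_
      obtain ⟨i, j, hij, hCij, hτij⟩ := hbadstruct τ hτ
      refine subset_iUnion_of_subset (i, j, τ i) ?_
      simp only [hE, if_neg hij]
      intro x hx
      intro l _
      by_cases hl : l = i ∨ l = j
      · simp only [if_pos hl]
        have hQQ : Q j (τ j) = Q i (τ i) := by rw [← hQeq i j hCij, ← hτij]
        rcases hl with rfl | rfl
        · exact hx l trivial
        · exact hQQ ▸ hx l trivial
      · simp only [if_neg hl]
        exact hCs l ((hQ l).2.1 (τ l) (hx l trivial))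
    have hEvol : ∀ z, volume (E z) ≤ t * t := by
      rintro ⟨i, j, p⟩
      by_cases hij : i = j
      · simp [hE, hij]
      · simp only [hE, if_neg hij]
        rw [volume_pi_pi]
        have hsplitprod : (∏ l : Fin m, volume (if l = i ∨ l = j then Q i p else Icc (0:ℝ) 1))
            = (∏ l ∈ ({i, j} : Finset (Fin m)),
                volume (if l = i ∨ l = j then Q i p else Icc (0:ℝ) 1))
              * ∏ l ∈ ({i, j} : Finset (Fin m))ᶜ,
                volume (if l = i ∨ l = j then Q i p else Icc (0:ℝ) 1) :=
          (Finset.prod_mul_prod_compl _ _).symm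
        rw [hsplitprod, Finset.prod_pair hij]
        have h1 : volume (if i = i ∨ i = j then Q i p else Icc (0:ℝ) 1) ≤ t := by
          rw [if_pos (Or.inl rfl)]; exact hQvle i p
        have h2 : volume (if j = i ∨ j = j then Q i p else Icc (0:ℝ) 1) ≤ t := by
          rw [if_pos (Or.inr rfl)]; exact hQvle i p
        have h3 : (∏ l ∈ ({i, j} : Finset (Fin m))ᶜ,
            volume (if l = i ∨ l = j then Q i p else Icc (0:ℝ) 1)) ≤ 1 := by
          refine Finset.prod_le_one' fun l hl => ?_
          simp only [Finset.mem_compl, Finset.mem_insert, Finset.mem_singleton, not_or] at hl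
          rw [if_neg (by tauto)]
          simp [Real.volume_Icc]
        calc volume (if i = i ∨ i = j then Q i p else Icc (0:ℝ) 1)
              * volume (if j = i ∨ j = j then Q i p else Icc (0:ℝ) 1)
              * ∏ l ∈ ({i, j} : Finset (Fin m))ᶜ,
                  volume (if l = i ∨ l = j then Q i p else Icc (0:ℝ) 1)
            ≤ t * t * 1 := mul_le_mul' (mul_le_mul' h1 h2) h3
          _ = t * t := by rw [mul_one]
    have hcard : (Finset.univ : Finset (Fin m × Fin m × Fin n)).card = m * m * n := by
      simp [Finset.card_univ, mul_assoc]
    have h3 : volume BadSet ≤ ((m * m * n : ℕ) : ℝ≥0∞) * (t * t) := by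
      refine le_trans (measure_mono hsub) (le_trans (measure_iUnion_le _) ?_)
      rw [tsum_fintype]
      refine le_trans (Finset.sum_le_card_nsmul _ _ (t*t) (fun z _ => hEvol z)) ?_
      rw [hcard, nsmul_eq_mul]
    refine lt_of_le_of_lt (le_trans h3 ?_) hMt
    have harith : ((m * m * n : ℕ) : ℝ≥0∞) * (t * t) = ((m*m : ℕ) : ℝ≥0∞) * t := by
      push_cast
      calc ((m:ℝ≥0∞) * m * n) * (t * t) = ((m:ℝ≥0∞) * m) * ((n * t) * t) := by ring
        _ = ((m:ℝ≥0∞) * m) * t := by rw [htn, one_mul]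
    rw [harith]
    refine mul_le_mul_left ?_ t
    rw [hM]
    exact_mod_cast Nat.le_add_left (m*m) m
  -- norm bound on small sets
  have hnormbound : ∀ s : Set (Fin m → ℝ), MeasurableSet s → s ⊆ cube → volume s < δ →
      ‖∫ x in s, f x‖ ≤ ε / 2 := by
    intro s hsm hscube hsvol
    have h1 : (volume.restrict cube) s < δ := by
      rw [Measure.restrict_apply hsm]
      exact lt_of_le_of_lt (measure_mono inter_subset_left) hsvol
    have h2 := hδ s h1
    have h3 : ∫ x in s, f x ∂volume = ∫ x in s, f x ∂(volume.restrict cube) := by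
      rw [Measure.restrict_restrict hsm, inter_eq_left.mpr hscube]
    rw [h3]
    refine le_of_lt (lt_of_le_of_lt (norm_integral_le_lintegral_norm f) ?_)
    refine ENNReal.toReal_lt_of_lt_ofReal ?_
    exact lt_of_eq_of_lt (lintegral_congr fun a => ofReal_norm_eq_enorm (f a)) h2
  -- diff set bound
  have hdiffsub : Set.univ.pi C \ Set.univ.pi D ⊆
      ⋃ i : Fin m, Set.univ.pi (fun l => if l = i then C l \ D l else Icc (0:ℝ) 1) := by
    rintro x ⟨hx1, hx2⟩
    simp only [mem_pi, mem_univ, true_implies, not_forall] at hx2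
    obtain ⟨i, hi⟩ := hx2
    refine mem_iUnion.mpr ⟨i, fun l _ => ?_⟩
    by_cases hl : l = i
    · subst hl
      simp only [if_pos rfl]
      exact ⟨hx1 l trivial, hi⟩
    · simp only [if_neg hl]
      exact hCs l (hx1 l trivial)
  have hdiffmeas : MeasurableSet (Set.univ.pi C \ Set.univ.pi D) :=
    (MeasurableSet.univ_pi hCm).diff (MeasurableSet.univ_pi hDm)
  have hdiffvol : volume (Set.univ.pi C \ Set.univ.pi D) < δ := by
    have hone : ∀ i : Fin m,
        volume (Set.univ.pi (fun l => if l = i then C l \ D l else Icc (0:ℝ) 1)) ≤ t := by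
      intro i
      rw [volume_pi_pi]
      rw [← Finset.mul_prod_erase Finset.univ
        (fun l => volume (if l = i then C l \ D l else Icc (0:ℝ) 1)) (Finset.mem_univ i)]
      have h1 : volume (if i = i then C i \ D i else Icc (0:ℝ) 1) ≤ t := by
        rw [if_pos rfl]
        exact ((hQ i).2.2.2.2).le
      have h2 : (∏ l ∈ Finset.univ.erase i,
          volume (if l = i then C l \ D l else Icc (0:ℝ) 1)) ≤ 1 := by
        refine Finset.prod_le_one' fun l hl => ?_
        rw [if_neg (Finset.ne_of_mem_erase hl)]
        simp [Real.volume_Icc]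
      calc volume (if i = i then C i \ D i else Icc (0:ℝ) 1)
          * ∏ l ∈ Finset.univ.erase i, volume (if l = i then C l \ D l else Icc (0:ℝ) 1)
          ≤ t * 1 := mul_le_mul' h1 h2
        _ = t := mul_one t
    have h3 : volume (Set.univ.pi C \ Set.univ.pi D) ≤ ((m : ℕ) : ℝ≥0∞) * t := by
      refine le_trans (measure_mono hdiffsub) (le_trans (measure_iUnion_le _) ?_)
      rw [tsum_fintype]
      refine le_trans (Finset.sum_le_card_nsmul _ _ t (fun i _ => hone i)) ?_
      rw [Finset.card_univ, Fintype.card_fin, nsmul_eq_mul]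
    refine lt_of_le_of_lt (le_trans h3 ?_) hMt
    refine mul_le_mul_left ?_ t
    rw [hM]
    exact_mod_cast Nat.le_add_right m (m*m)
  -- put it together
  have hsplit : ∫ x in Set.univ.pi C, f x
      = (∫ x in Set.univ.pi D, f x) + ∫ x in (Set.univ.pi C \ Set.univ.pi D), f x := by
    have hID : ∫ x in (Set.univ.pi C \ Set.univ.pi D), f x
        = (∫ x in Set.univ.pi C, f x) - ∫ x in Set.univ.pi D, f x :=
      integral_diff (MeasurableSet.univ_pi hDm) (hint _ hpiC_cube) hpiD_C
    rw [hID]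
    ring
  rw [hsumD, hsumBad] at hsplit
  rw [hsplit]
  calc ‖(∫ x in BadSet, f x) + ∫ x in (Set.univ.pi C \ Set.univ.pi D), f x‖
      ≤ ‖∫ x in BadSet, f x‖ + ‖∫ x in (Set.univ.pi C \ Set.univ.pi D), f x‖ :=
        norm_add_le _ _
    _ ≤ ε/2 + ε/2 := add_le_add (hnormbound BadSet hBSmeas hBScube hBadvol)
        (hnormbound _ hdiffmeas (diff_subset.trans hpiC_cube) hdiffvol)
    _ = ε := by ring

lemma aux_rect (m : ℕ) (hm : 1 ≤ m) (f : (Fin m → ℝ) → ℝ)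
    (hf : IntegrableOn f (Set.univ.pi fun _ : Fin m => Set.Icc (0 : ℝ) 1) volume)
    (H : ∀ A : Fin m → Set ℝ, (∀ i, MeasurableSet (A i)) →
      (∀ i, A i ⊆ Set.Icc (0 : ℝ) 1) →
      (∀ i j, i ≠ j → Disjoint (A i) (A j)) →
      (∀ i j, volume (A i) = volume (A j)) →
      ∫ x in Set.univ.pi A, f x = 0)
    (B : Fin m → Set ℝ) (hBm : ∀ i, MeasurableSet (B i))
    (hBs : ∀ i, B i ⊆ Icc (0:ℝ) 1) :
    ∫ x in Set.univ.pi B, f x = 0 := by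
  classical
  set A : Finset (Fin m) → Set ℝ := fun T =>
    ⋂ i, (if i ∈ T then B i else Icc (0:ℝ) 1 \ B i) with hA
  have hAmeas : ∀ T, MeasurableSet (A T) := by
    intro T
    refine MeasurableSet.iInter fun i => ?_
    by_cases h : i ∈ T
    · simp only [if_pos h]; exact hBm i
    · simp only [if_neg h]; exact measurableSet_Icc.diff (hBm i)
  have hAsub : ∀ T, A T ⊆ Icc (0:ℝ) 1 := by
    intro T x hx
    have h0 := mem_iInter.mp hx ⟨0, hm⟩
    by_cases h : (⟨0, hm⟩ : Fin m) ∈ T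
    · rw [if_pos h] at h0; exact hBs _ h0
    · rw [if_neg h] at h0; exact h0.1
  have hAmemB : ∀ (T) (i), i ∈ T → A T ⊆ B i := by
    intro T i hi x hx
    have := mem_iInter.mp hx i
    rwa [if_pos hi] at this
  have hAnotB : ∀ (T) (i), i ∉ T → A T ⊆ Icc (0:ℝ) 1 \ B i := by
    intro T i hi x hx
    have := mem_iInter.mp hx i
    rwa [if_neg hi] at this
  have hAdisj : ∀ T T', T ≠ T' → Disjoint (A T) (A T') := by
    intro T T' hTT'
    have hex : ∃ i, ¬ (i ∈ T ↔ i ∈ T') := by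
      by_contra h
      push_neg at h
      exact hTT' (Finset.ext fun i => h i)
    obtain ⟨i, hi⟩ := hex
    rw [not_iff] at hi
    by_cases h1 : i ∈ T
    · have h2 : i ∉ T' := fun h' => hi.mpr h' h1
      exact Set.disjoint_left.mpr fun x hx hx' => (hAnotB T' i h2 hx').2 (hAmemB T i h1 hx)
    · have h2 : i ∈ T' := hi.mp h1
      exact Set.disjoint_left.mpr fun x hx hx' => (hAnotB T i h1 hx).2 (hAmemB T' i h2 hx')
  have hBA : ∀ i T, B i ∩ A T = if i ∈ T then A T else ∅ := by
    intro i T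
    by_cases h : i ∈ T
    · rw [if_pos h]
      exact inter_eq_right.mpr (hAmemB T i h)
    · rw [if_neg h]
      exact eq_empty_of_forall_notMem fun x hx => (hAnotB T i h hx.2).2 hx.1
  have hBdecomp : ∀ i, B i = ⋃ T : Finset (Fin m), (B i ∩ A T) := by
    intro i
    refine Subset.antisymm ?_ (iUnion_subset fun T => inter_subset_left)
    intro x hx
    refine mem_iUnion.mpr ⟨Finset.univ.filter (fun j => x ∈ B j), hx, ?_⟩
    refine mem_iInter.mpr fun j => ?_
    split_ifs with hj
    · exact (Finset.mem_filter.mp hj).2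
    · exact ⟨hBs i hx, fun hxj => hj (by simp [hxj])⟩
  have hdecomp : Set.univ.pi B
      = ⋃ τ : Fin m → Finset (Fin m), Set.univ.pi fun i => B i ∩ A (τ i) := by
    conv_lhs => rw [show Set.univ.pi B = Set.univ.pi (fun i => ⋃ T : Finset (Fin m), (B i ∩ A T))
      from by rw [Set.pi_congr rfl (fun i _ => hBdecomp i)]]
    exact aux_pi_iUnion _
  have hpiece_meas : ∀ τ : Fin m → Finset (Fin m),
      MeasurableSet (Set.univ.pi fun i => B i ∩ A (τ i)) :=
    fun τ => MeasurableSet.univ_pi fun i => (hBm i).inter (hAmeas (τ i))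
  have hpdisj : Pairwise (Function.onFun Disjoint fun τ : Fin m → Finset (Fin m) =>
      Set.univ.pi fun i => B i ∩ A (τ i)) := by
    intro τ τ' hττ'
    obtain ⟨i, hi⟩ := Function.ne_iff.mp hττ'
    exact aux_disjoint_pi (u := fun i => B i ∩ A (τ i)) (v := fun i => B i ∩ A (τ' i)) (i := i)
      ((hAdisj _ _ hi).mono inter_subset_right inter_subset_right)
  have hint : IntegrableOn f (Set.univ.pi B) volume :=
    hf.mono_set (pi_mono fun i _ => hBs i)
  rw [hdecomp, integral_iUnion hpiece_meas hpdisj (by rw [← hdecomp]; exact hint), tsum_fintype]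
  refine Finset.sum_eq_zero fun τ _ => ?_
  refine aux_key m hm f hf H _ (fun i => (hBm i).inter (hAmeas (τ i)))
    (fun i => inter_subset_left.trans (hBs i)) ?_
  intro i j
  rw [hBA i (τ i), hBA j (τ j)]
  by_cases h1 : i ∈ τ i
  · by_cases h2 : j ∈ τ j
    · rw [if_pos h1, if_pos h2]
      by_cases h3 : τ i = τ j
      · exact Or.inl (by rw [h3])
      · exact Or.inr (hAdisj _ _ h3)
    · rw [if_neg h2]
      exact Or.inr (by simp)
  · rw [if_neg h1]
    exact Or.inr (by simp)

end Aux

section Main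
open Set
open scoped ENNReal

/-- **Lemma.** If `f : [0,1]^m → ℝ` is integrable and `∫_{A₁ × ⋯ × A_m} f = 0` for all
`m`-tuples of pairwise disjoint measurable subsets of `[0,1]` of equal Lebesgue measure,
then `f = 0` almost everywhere on `[0,1]^m`. -/
theorem stmt8 (m : ℕ) (hm : 1 ≤ m) (f : (Fin m → ℝ) → ℝ)
    (hf : IntegrableOn f (Set.univ.pi fun _ : Fin m => Set.Icc (0 : ℝ) 1) volume)
    (H : ∀ A : Fin m → Set ℝ, (∀ i, MeasurableSet (A i)) →
      (∀ i, A i ⊆ Set.Icc (0 : ℝ) 1) →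
      (∀ i j, i ≠ j → Disjoint (A i) (A j)) →
      (∀ i j, volume (A i) = volume (A j)) →
      ∫ x in Set.univ.pi A, f x = 0) :
    ∀ᵐ x ∂((volume : Measure (Fin m → ℝ)).restrict
        (Set.univ.pi fun _ : Fin m => Set.Icc (0 : ℝ) 1)), f x = 0 := by
  set cube : Set (Fin m → ℝ) := Set.univ.pi fun _ : Fin m => Icc (0:ℝ) 1 with hcube
  have hcube_meas : MeasurableSet cube := MeasurableSet.univ_pi fun _ => measurableSet_Icc
  set μ : Measure (Fin m → ℝ) := volume.restrict cube with hμ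
  have hfint : Integrable f μ := hf
  -- the two densities
  set ν₁ : Measure (Fin m → ℝ) := μ.withDensity (fun x => ENNReal.ofReal (f x)) with hν₁
  set ν₂ : Measure (Fin m → ℝ) := μ.withDensity (fun x => ENNReal.ofReal (-f x)) with hν₂
  haveI hfm1 : IsFiniteMeasure ν₁ := isFiniteMeasure_withDensity_ofReal hfint.2
  haveI hfm2 : IsFiniteMeasure ν₂ := isFiniteMeasure_withDensity_ofReal hfint.neg.2
  -- key identity
  have hkey : ∀ s : Set (Fin m → ℝ), MeasurableSet s →
      ∫ x in s, f x ∂μ = (ν₁ s).toReal - (ν₂ s).toReal := by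
    intro s hs
    rw [hν₁, hν₂, withDensity_apply _ hs, withDensity_apply _ hs]
    exact integral_eq_lintegral_pos_part_sub_lintegral_neg_part (hfint.restrict (s := s))
  -- vanishing on rectangles
  have hrect : ∀ t : Fin m → Set ℝ, (∀ i, MeasurableSet (t i)) →
      ∫ x in Set.univ.pi t, f x ∂μ = 0 := by
    intro t ht
    have h1 : ∫ x in Set.univ.pi t, f x ∂μ
        = ∫ x in (Set.univ.pi t ∩ cube), f x ∂volume := by
      rw [hμ, Measure.restrict_restrict (MeasurableSet.univ_pi ht)]
    rw [h1, hcube, ← Set.pi_inter_distrib]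
    exact aux_rect m hm f hf H _ (fun i => (ht i).inter measurableSet_Icc)
      (fun i => inter_subset_right)
  -- agreement of the measures
  have hagree : ν₁ = ν₂ := by
    refine ext_of_generate_finite _ generateFrom_pi.symm isPiSystem_pi ?_ ?_
    · rintro s ⟨t, ht, rfl⟩
      have htm : ∀ i, MeasurableSet (t i) := fun i => ht i (mem_univ i)
      have h0 := hrect t htm
      rw [hkey _ (MeasurableSet.univ_pi htm)] at h0
      have h1 : (ν₁ (Set.univ.pi t)).toReal = (ν₂ (Set.univ.pi t)).toReal := by linarith
      exact (ENNReal.toReal_eq_toReal_iff' (measure_ne_top _ _) (measure_ne_top _ _)).mp h1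
    · have h0 : ∫ x in (univ : Set (Fin m → ℝ)), f x ∂μ = 0 := by
        rw [Measure.restrict_univ]
        have := hrect (fun _ => Icc (0:ℝ) 1) (fun _ => measurableSet_Icc)
        rw [hμ, Measure.restrict_restrict (MeasurableSet.univ_pi fun _ => measurableSet_Icc)] at this
        rw [hμ]
        simpa [hcube, inter_self] using this
      rw [hkey _ MeasurableSet.univ] at h0
      have h1 : (ν₁ univ).toReal = (ν₂ univ).toReal := by linarith
      exact (ENNReal.toReal_eq_toReal_iff' (measure_ne_top _ _) (measure_ne_top _ _)).mp h1
  -- all set integrals vanish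
  have hzero : ∀ s : Set (Fin m → ℝ), MeasurableSet s → μ s < ∞ → ∫ x in s, f x ∂μ = 0 := by
    intro s hs _
    rw [hkey s hs, hagree, sub_self]
  haveI : IsFiniteMeasure μ := by
    constructor
    rw [hμ, Measure.restrict_apply MeasurableSet.univ, univ_inter, hcube, volume_pi_pi]
    simp [Real.volume_Icc]
  have := ae_eq_zero_of_forall_setIntegral_eq_of_sigmaFinite (μ := μ)
    (fun s _ _ => hfint.integrableOn) hzero
  filter_upwards [this] with x hx using hx

end Main
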